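/- arXiv:2106.01025 — 5 statements merged into one kernel-verified Lean document; each statement's English description precedes it below -/
import Mathlib

section
/- Let 0 < r < R, h = R − r, ρ > 0, η > 0, and χ_max ∈ [−1, 1), and set D_max = √(R² + r² − 2rRχ_max). Then the integral ρR² ∫_{χ_max}^{1} (1 − χ²)(1 + η(R² + r² − 2rRχ)) / (R² + r² − 2rRχ)³ dχ equals (ρ/(16 r³ R)) · [ 4(2η(r² + R²) − 1)·ln(D_max/h) + (2η(r² − R²)² − 4(r² + R²))·(h² − D_max²)/(D_max² h²) − 4ηrR(1 − χ_max) + (r² − R²)²·(h⁴ − D_max⁴)/(D_max⁴ h⁴) ]. -/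
/-- closed form of the RSS horizontal-FIM integral. -/
theorem rss_xy_integral
    (r R h ρ η χmax Dmax : ℝ)
    (hr : 0 < r) (hrR : r < R) (hh : h = R - r)
    (hρ : 0 < ρ) (hη : 0 < η)
    (hχ1 : -1 ≤ χmax) (hχ2 : χmax < 1)
    (hD : Dmax = Real.sqrt (R ^ 2 + r ^ 2 - 2 * r * R * χmax)) :
    ρ * R ^ 2 *
        ∫ χ in χmax..1,
          (1 - χ ^ 2) * (1 + η * (R ^ 2 + r ^ 2 - 2 * r * R * χ)) /
            (R ^ 2 + r ^ 2 - 2 * r * R * χ) ^ 3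
      = ρ / (16 * r ^ 3 * R) *
          (4 * (2 * η * (r ^ 2 + R ^ 2) - 1) * Real.log (Dmax / h)
            + (2 * η * (r ^ 2 - R ^ 2) ^ 2 - 4 * (r ^ 2 + R ^ 2)) *
                (h ^ 2 - Dmax ^ 2) / (Dmax ^ 2 * h ^ 2)
            - 4 * η * r * R * (1 - χmax)
            + (r ^ 2 - R ^ 2) ^ 2 * (h ^ 4 - Dmax ^ 4) / (Dmax ^ 4 * h ^ 4)) := by
  have hR : 0 < R := hr.trans hrR
  have hRr : (0:ℝ) < R - r := by linarith
  have hu : ∀ x ∈ Set.uIcc χmax 1, 0 < R ^ 2 + r ^ 2 - 2 * r * R * x := by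
    intro x hx
    rw [Set.uIcc_of_le hχ2.le] at hx
    have h1 : 2 * r * R * x ≤ 2 * r * R * 1 :=
      mul_le_mul_of_nonneg_left hx.2 (by positivity)
    nlinarith [sq_nonneg (R - r), mul_pos hr hR]
  set G : ℝ → ℝ := fun χ => -(1/(8*r^3*R^3)) *
      (-η * (R^2+r^2-2*r*R*χ)
        + (2*(R^2+r^2)*η - 1) * Real.log (R^2+r^2-2*r*R*χ)
        - (2*(R^2+r^2) - η*(R^2-r^2)^2)/(R^2+r^2-2*r*R*χ)
        + (R^2-r^2)^2/(2*(R^2+r^2-2*r*R*χ)^2)) with hG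
  have hderiv : ∀ x ∈ Set.uIcc χmax 1, HasDerivAt G
      ((1 - x ^ 2) * (1 + η * (R ^ 2 + r ^ 2 - 2 * r * R * x)) /
            (R ^ 2 + r ^ 2 - 2 * r * R * x) ^ 3) x := by
    intro x hx
    have hux := hu x hx
    have hne : R ^ 2 + r ^ 2 - 2 * r * R * x ≠ 0 := ne_of_gt hux
    have hU : HasDerivAt (fun χ : ℝ => R^2+r^2-2*r*R*χ) (-(2*r*R)) x := by
      simpa using ((hasDerivAt_id x).const_mul (2*r*R)).const_sub (R^2+r^2)
    have hlog : HasDerivAt (fun χ : ℝ => Real.log (R^2+r^2-2*r*R*χ))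
        ((R^2+r^2-2*r*R*x)⁻¹ * -(2*r*R)) x := by
        have := (Real.hasDerivAt_log hne).comp x hU; exact this
    have h2 : HasDerivAt (fun χ : ℝ => -η * (R^2+r^2-2*r*R*χ)) (-η * -(2*r*R)) x :=
      hU.const_mul (-η)
    have h3 : HasDerivAt (fun χ : ℝ => (2*(R^2+r^2) - η*(R^2-r^2)^2)/(R^2+r^2-2*r*R*χ))
        ((0 * (R^2+r^2-2*r*R*x) - (2*(R^2+r^2) - η*(R^2-r^2)^2) * -(2*r*R)) /
          (R^2+r^2-2*r*R*x)^2) x :=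
      (hasDerivAt_const x _).div hU hne
    have hU2 : HasDerivAt (fun χ : ℝ => (R^2+r^2-2*r*R*χ)^2)
        (↑2 * (R^2+r^2-2*r*R*x) ^ 1 * -(2*r*R)) x := hU.pow 2
    have hU2' : HasDerivAt (fun χ : ℝ => 2*(R^2+r^2-2*r*R*χ)^2)
        (2 * (↑2 * (R^2+r^2-2*r*R*x) ^ 1 * -(2*r*R))) x := hU2.const_mul 2
    have h4 : HasDerivAt (fun χ : ℝ => (R^2-r^2)^2/(2*(R^2+r^2-2*r*R*χ)^2))
        ((0 * (2*(R^2+r^2-2*r*R*x)^2) - (R^2-r^2)^2 * (2 * (↑2 * (R^2+r^2-2*r*R*x) ^ 1 * -(2*r*R)))) /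
          (2*(R^2+r^2-2*r*R*x)^2)^2) x :=
      (hasDerivAt_const x _).div hU2' (by positivity)
    have H := (((h2.add (hlog.const_mul (2*(R^2+r^2)*η - 1))).sub h3).add h4).const_mul
      (-(1/(8*r^3*R^3)))
    refine H.congr_deriv ?_
    have hr' : r ≠ 0 := ne_of_gt hr
    have hR' : R ≠ 0 := ne_of_gt hR
    have hne2 : R ^ 2 + r ^ 2 - r * R * 2 * x ≠ 0 := by
      rw [show r * R * 2 * x = 2 * r * R * x by ring]; exact hne
    field_simp
    ring
  have hInt : IntervalIntegrable (fun χ =>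
      (1 - χ ^ 2) * (1 + η * (R ^ 2 + r ^ 2 - 2 * r * R * χ)) /
        (R ^ 2 + r ^ 2 - 2 * r * R * χ) ^ 3) MeasureTheory.volume χmax 1 := by
    apply ContinuousOn.intervalIntegrable
    apply ContinuousOn.div
    · fun_prop
    · fun_prop
    · intro x hx; exact pow_ne_zero 3 (ne_of_gt (hu x hx))
  have key := intervalIntegral.integral_eq_sub_of_hasDerivAt hderiv hInt
  rw [key]
  -- now evaluate
  have hum := hu χmax Set.left_mem_uIcc
  have hD2 : Dmax ^ 2 = R ^ 2 + r ^ 2 - 2 * r * R * χmax := by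
    rw [hD]; exact Real.sq_sqrt hum.le
  have hDpos : 0 < Dmax := by
    rw [hD]; exact Real.sqrt_pos.mpr hum
  subst hh
  have e1 : R^2+r^2-2*r*R*(1:ℝ) = (R - r)^2 := by ring
  have e2 : R^2+r^2-2*r*R*χmax = Dmax^2 := hD2.symm
  have hχ : χmax = (R^2+r^2-Dmax^2)/(2*r*R) := by
    field_simp
    linarith [hD2]
  simp only [hG]
  simp only [e1, e2, Real.log_pow, Real.log_div (ne_of_gt hDpos) (ne_of_gt hRr)]
  rw [hχ]
  have h1 : R - r ≠ 0 := ne_of_gt hRr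
  have h2 : Dmax ≠ 0 := ne_of_gt hDpos
  have hr' : r ≠ 0 := ne_of_gt hr
  have hR' : R ≠ 0 := ne_of_gt hR
  field_simp
  ring
end

section
/- Let 0 < r < R, h = R − r, ρ > 0, η > 0, and χ_max ∈ [−1, 1), and set D_max = √(R² + r² − 2rRχ_max). Then ρ ∫_{χ_max}^{1} (1 + η(R² + r² − 2rRχ))·(Rχ − r)² / (R² + r² − 2rRχ)³ dχ equals (ρ/(16 r³ R)) · [ 2(r² − R²)(η(r² − R²) + 2)·(D_max² − h²)/(h² D_max²) − 4(2η(R² − r²) − 1)·ln(D_max/h) + 4ηrR(1 − χ_max) + (r² − R²)²·(D_max⁴ − h⁴)/(h⁴ D_max⁴) ]. -/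
set_option maxHeartbeats 1000000


/-- closed form of the RSS vertical-FIM integral. -/
theorem rss_z_integral
    (r R h ρ η χmax Dmax : ℝ)
    (hr : 0 < r) (hrR : r < R) (hh : h = R - r)
    (hρ : 0 < ρ) (hη : 0 < η)
    (hχ1 : -1 ≤ χmax) (hχ2 : χmax < 1)
    (hD : Dmax = Real.sqrt (R ^ 2 + r ^ 2 - 2 * r * R * χmax)) :
    ρ *
        ∫ χ in χmax..1,
          (1 + η * (R ^ 2 + r ^ 2 - 2 * r * R * χ)) * (R * χ - r) ^ 2 /
            (R ^ 2 + r ^ 2 - 2 * r * R * χ) ^ 3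
      = ρ / (16 * r ^ 3 * R) *
          (2 * (r ^ 2 - R ^ 2) * (η * (r ^ 2 - R ^ 2) + 2) *
              (Dmax ^ 2 - h ^ 2) / (h ^ 2 * Dmax ^ 2)
            - 4 * (2 * η * (R ^ 2 - r ^ 2) - 1) * Real.log (Dmax / h)
            + 4 * η * r * R * (1 - χmax)
            + (r ^ 2 - R ^ 2) ^ 2 * (Dmax ^ 4 - h ^ 4) / (h ^ 4 * Dmax ^ 4)) := by
  have hR : 0 < R := hr.trans hrR
  subst hh
  have hhpos : 0 < R - r := by linarith
  set u : ℝ → ℝ := fun χ => R ^ 2 + r ^ 2 - 2 * r * R * χ with hu_def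
  have hupos : ∀ χ ∈ Set.uIcc χmax (1 : ℝ), 0 < u χ := by
    intro χ hχ
    rw [Set.uIcc_of_le hχ2.le] at hχ
    have h1 : χ ≤ 1 := hχ.2
    have h2 : 0 < r * R := mul_pos hr hR
    simp only [hu_def]
    nlinarith [sq_nonneg (R - r)]
  set a : ℝ := R ^ 2 - r ^ 2 with ha
  set F : ℝ → ℝ := fun χ => -(1 / (8 * r ^ 3 * R)) *
      (-a ^ 2 / (2 * (u χ) ^ 2) + (2 * a - η * a ^ 2) / (u χ)
        + (1 - 2 * a * η) * Real.log (u χ) + η * (u χ)) with hF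
  have hderiv : ∀ χ ∈ Set.uIcc χmax (1 : ℝ),
      HasDerivAt F ((1 + η * u χ) * (R * χ - r) ^ 2 / (u χ) ^ 3) χ := by
    intro χ hχ
    have hu0 : u χ ≠ 0 := (hupos χ hχ).ne'
    have hu' : HasDerivAt u (-(2 * r * R)) χ := by
      simpa using ((hasDerivAt_id χ).const_mul (2 * r * R)).const_sub (R ^ 2 + r ^ 2)
    have hden2 : 2 * (u χ) ^ 2 ≠ 0 := by
      have := pow_ne_zero 2 hu0; intro hcon; apply this; linarith [hcon]
    have H := (((((hasDerivAt_const χ (-a ^ 2)).div ((hu'.pow 2).const_mul 2) hden2).add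
        ((hasDerivAt_const χ (2 * a - η * a ^ 2)).div hu' hu0)).add
        ((hu'.log hu0).const_mul (1 - 2 * a * η))).add
        (hu'.const_mul η)).const_mul (-(1 / (8 * r ^ 3 * R)))
    convert H using 1
    · rfl
    · rfl
    · rfl
    have hrRχ : R * χ - r = (a - u χ) / (2 * r) := by
      simp only [hu_def, ha]; field_simp; ring
    rw [hrRχ]
    simp only [Pi.pow_apply]
    field_simp
    ring
  have hint : IntervalIntegrable (fun χ => (1 + η * u χ) * (R * χ - r) ^ 2 / (u χ) ^ 3)
      MeasureTheory.volume χmax 1 := by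
    apply ContinuousOn.intervalIntegrable
    apply ContinuousOn.div
    · fun_prop
    · fun_prop
    · intro χ hχ; exact pow_ne_zero 3 (hupos χ hχ).ne'
  have hkey := intervalIntegral.integral_eq_sub_of_hasDerivAt hderiv hint
  have hgoal : (∫ χ in χmax..1,
      (1 + η * (R ^ 2 + r ^ 2 - 2 * r * R * χ)) * (R * χ - r) ^ 2 /
        (R ^ 2 + r ^ 2 - 2 * r * R * χ) ^ 3) = F 1 - F χmax := hkey
  rw [hgoal]
  -- now pure algebra
  have hu1 : u 1 = (R - r) ^ 2 := by simp only [hu_def]; ring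
  have hDmaxpos : 0 < Dmax := by
    rw [hD]
    exact Real.sqrt_pos.mpr (hupos χmax (Set.left_mem_uIcc))
  have hD2 : u χmax = Dmax ^ 2 := by
    rw [hD, Real.sq_sqrt (hupos χmax Set.left_mem_uIcc).le]
  have hlog1 : Real.log (u 1) = 2 * Real.log (R - r) := by
    rw [hu1, Real.log_pow]; push_cast; ring
  have hlog2 : Real.log (u χmax) = 2 * Real.log Dmax := by
    rw [hD2, Real.log_pow]; push_cast; ring
  have hlogq : Real.log (Dmax / (R - r)) = Real.log Dmax - Real.log (R - r) :=
    Real.log_div hDmaxpos.ne' hhpos.ne'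
  have huχ : u χmax = R ^ 2 + r ^ 2 - 2 * r * R * χmax := rfl
  simp only [hF, hlog1, hlog2, hlogq, hu1]
  rw [hD2] at huχ ⊢
  have h1 : R - r ≠ 0 := hhpos.ne'
  have h2 : Dmax ≠ 0 := hDmaxpos.ne'
  have h3 : r ≠ 0 := hr.ne'
  have h4 : R ≠ 0 := hR.ne'
  have hχm : χmax = (R ^ 2 + r ^ 2 - Dmax ^ 2) / (2 * r * R) := by
    field_simp; linarith [huχ]
  rw [hχm]
  simp only [ha, Real.log_pow]
  push_cast
  field_simp
  ring
end

section
/- Let r > 0, h > 0, set R = r + h, let ρ > 0, η > 0, χ_max ∈ [−1, 1), and set D_max = √(R² + r² − 2rRχ_max). Then ρη R² ∫_{χ_max}^{1} (1 − χ²)/(R² + r² − 2rRχ)² dχ equals 2ρη · [ ln(D_max/h)·((r + h)² + r²)/(4 r³ (r + h)) − (1 − χ_max)·(D_max² + r(r + h)(1 + χ_max))/(4 r² D_max²) ]. -/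
set_option maxHeartbeats 4000000


/-- closed form of the TDOA horizontal-FIM integral. -/
theorem tdoa_xy_integral
    (r h R ρ η χmax Dmax : ℝ)
    (hr : 0 < r) (hh : 0 < h) (hR : R = r + h)
    (hρ : 0 < ρ) (hη : 0 < η)
    (hχ1 : -1 ≤ χmax) (hχ2 : χmax < 1)
    (hD : Dmax = Real.sqrt (R ^ 2 + r ^ 2 - 2 * r * R * χmax)) :
    ρ * η * R ^ 2 *
        ∫ χ in χmax..1, (1 - χ ^ 2) / (R ^ 2 + r ^ 2 - 2 * r * R * χ) ^ 2
      = 2 * ρ * η *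
          (Real.log (Dmax / h) * ((r + h) ^ 2 + r ^ 2) / (4 * r ^ 3 * (r + h))
            - (1 - χmax) * (Dmax ^ 2 + r * (r + h) * (1 + χmax)) /
                (4 * r ^ 2 * Dmax ^ 2)) := by
  have hRpos : 0 < R := by rw [hR]; linarith
  set A : ℝ := R ^ 2 + r ^ 2 with hA
  set B : ℝ := 2 * r * R with hB
  have hBpos : 0 < B := by positivity
  have hle : χmax ≤ 1 := hχ2.le
  -- Q positivity on [χmax, 1]
  have hQpos : ∀ χ ∈ Set.Icc χmax 1, 0 < A - B * χ := by
    intro χ hχ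
    have h1 : B * χ ≤ B := by nlinarith [hχ.2]
    have h2 : A - B = (R - r) ^ 2 := by rw [hA, hB]; ring
    have h3 : R - r = h := by rw [hR]; ring
    nlinarith
  have huIcc : Set.uIcc χmax 1 = Set.Icc χmax 1 := Set.uIcc_of_le hle
  -- antiderivative
  set F : ℝ → ℝ := fun χ =>
    -((R ^ 2 - r ^ 2) ^ 2) / (B ^ 3 * (A - B * χ)) - (2 * A / B ^ 3) * Real.log (A - B * χ)
      - χ / B ^ 2 with hF
  have hderiv : ∀ χ ∈ Set.uIcc χmax 1,
      HasDerivAt F ((1 - χ ^ 2) / (A - B * χ) ^ 2) χ := by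
    intro χ hχ
    rw [huIcc] at hχ
    have hQ := hQpos χ hχ
    have hQne : A - B * χ ≠ 0 := ne_of_gt hQ
    have hBne : B ≠ 0 := ne_of_gt hBpos
    have hq : HasDerivAt (fun χ : ℝ => A - B * χ) (-B) χ := by
      simpa using ((hasDerivAt_id χ).const_mul B).const_sub A
    have h1 : HasDerivAt (fun χ : ℝ => -((R ^ 2 - r ^ 2) ^ 2) / (B ^ 3 * (A - B * χ)))
        (-((R ^ 2 - r ^ 2) ^ 2) / (B ^ 2 * (A - B * χ) ^ 2)) χ := by
      have hd : HasDerivAt (fun χ : ℝ => B ^ 3 * (A - B * χ)) (B ^ 3 * (-B)) χ :=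
        hq.const_mul (B ^ 3)
      have hdne : B ^ 3 * (A - B * χ) ≠ 0 := mul_ne_zero (pow_ne_zero _ hBne) hQne
      have h' := (hasDerivAt_const χ (-((R ^ 2 - r ^ 2) ^ 2))).div hd hdne
      refine h'.congr_deriv ?_
      field_simp
      ring
    have h2 : HasDerivAt (fun χ : ℝ => (2 * A / B ^ 3) * Real.log (A - B * χ))
        ((2 * A / B ^ 3) * (-B / (A - B * χ))) χ :=
      ((hq.log hQne)).const_mul _
    have h3 : HasDerivAt (fun χ : ℝ => χ / B ^ 2) (1 / B ^ 2) χ := by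
      simpa using (hasDerivAt_id χ).div_const (B ^ 2)
    have hT := (h1.sub h2).sub h3
    refine hT.congr_deriv ?_
    field_simp
    rw [hA, hB]
    ring
  have hcont : IntervalIntegrable
      (fun χ => (1 - χ ^ 2) / (A - B * χ) ^ 2) MeasureTheory.volume χmax 1 := by
    apply ContinuousOn.intervalIntegrable
    apply ContinuousOn.div
    · fun_prop
    · fun_prop
    · intro χ hχ
      rw [huIcc] at hχ
      exact pow_ne_zero _ (ne_of_gt (hQpos χ hχ))
  have hint :
      (∫ χ in χmax..1, (1 - χ ^ 2) / (A - B * χ) ^ 2) = F 1 - F χmax :=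
    intervalIntegral.integral_eq_sub_of_hasDerivAt hderiv hcont
  rw [hint]
  have hQ1 : A - B * 1 = h ^ 2 := by rw [hA, hB, hR]; ring
  have hDarg : 0 < A - B * χmax := hQpos χmax ⟨le_refl _, hle⟩
  have hDmax : Dmax ^ 2 = A - B * χmax := by rw [hD, Real.sq_sqrt hDarg.le]
  have hDpos : 0 < Dmax := by rw [hD]; exact Real.sqrt_pos.mpr hDarg
  have hlog1 : Real.log (A - B * 1) = 2 * Real.log h := by
    rw [hQ1, Real.log_pow]; norm_num
  have hlog2 : Real.log (A - B * χmax) = 2 * Real.log Dmax := by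
    rw [← hDmax, Real.log_pow]; norm_num
  have hlogD : Real.log (Dmax / h) = Real.log Dmax - Real.log h :=
    Real.log_div (ne_of_gt hDpos) (ne_of_gt hh)
  rw [hF]
  simp only []
  rw [hlog1, hlog2, hlogD, hQ1]
  rw [← hDmax]
  have hD2 : Dmax ^ 2 = R ^ 2 + r ^ 2 - 2 * r * R * χmax := by rw [hDmax, hA, hB]
  have hDne : Dmax ≠ 0 := ne_of_gt hDpos
  have hhne : h ≠ 0 := ne_of_gt hh
  have hrne : r ≠ 0 := ne_of_gt hr
  have hrh : r + h ≠ 0 := by positivity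
  rw [hA, hB, hR]
  have harg : (r + h) ^ 2 + r ^ 2 - 2 * r * (r + h) * χmax ≠ 0 := by
    rw [hA, hB, hR] at hDarg; exact ne_of_gt hDarg
  rw [hR] at hD2
  rw [hD2]
  set E := (r + h) ^ 2 + r ^ 2 - 2 * r * (r + h) * χmax with hE
  field_simp
  rw [hE]
  ring
end

section
/- Let r > 0 and ζ ∈ (0, 1), and for h > 0 define D_max(h) = √(h² + 2hr + r²ζ²) − rζ. Then as h → ∞, h³ · ( ln(D_max(h)/h) − r(1 − ζ)/h − r²(ζ − 1)/h² − r³(ζ³ − 9ζ + 8)/(6h³) ) tends to 0; that is, ln(D_max(h)/h) = −r(ζ − 1)/h + r²(ζ − 1)/h² + r³(ζ³ − 9ζ + 8)/(6h³) + o(h⁻³). -/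
open Filter Topology

private noncomputable def Phi (r ζ t : ℝ) : ℝ :=
  (Real.log (1 + t) - (t - t^2/2 + t^3/3)) * (2*r*(1 - ζ - ζ*t))^3 / (t*(t+2))^3
    + t * (r^3 * ((-14 - 2*ζ + 10*ζ^2 - 2*ζ^3) + (-8 + 7*ζ + 10*ζ^2 - 5*ζ^3)*t
        + (-4/3 + 3/2*ζ - 17/6*ζ^3)*t^2)) / (t+2)^3

private lemma aux_ident (r ζ t h : ℝ) (ht : 0 < t) (hh : 0 < h)
    (hd : h * (t * (t + 2)) = 2*r*(1 - ζ - ζ*t)) :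
    h ^ 3 * (Real.log (1 + t) - r * (1 - ζ) / h - r ^ 2 * (ζ - 1) / h ^ 2
        - r ^ 3 * (ζ ^ 3 - 9 * ζ + 8) / (6 * h ^ 3)) = Phi r ζ t := by
  have ht2 : (0:ℝ) < t + 2 := by linarith
  have htt : t * (t + 2) ≠ 0 := by positivity
  have hdpos : 0 < 2*r*(1 - ζ - ζ*t) := by
    rw [← hd]; positivity
  have hE : h = 2*r*(1 - ζ - ζ*t) / (t*(t+2)) := by
    rw [eq_div_iff htt]; exact hd
  rw [Phi, hE]
  have h1 : t ≠ 0 := ht.ne'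
  have h2 : t + 2 ≠ 0 := ht2.ne'
  have h3 : 2*r*(1 - ζ - ζ*t) ≠ 0 := hdpos.ne'
  have h4 : r ≠ 0 := by rintro rfl; simp at h3
  have h5 : 1 - ζ - ζ*t ≠ 0 := by intro e; apply h3; rw [e]; ring
  field_simp
  ring

private lemma log_taylor_bound (t : ℝ) (ht0 : 0 < t) (ht1 : t < 1) :
    |Real.log (1 + t) - (t - t^2/2 + t^3/3)| ≤ t^4/(1-t) := by
  have h' : |(-t)| < 1 := by rw [abs_neg, abs_of_pos ht0]; exact ht1
  have key := Real.abs_log_sub_add_sum_range_le h' 3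
  have e1 : (∑ i ∈ Finset.range 3, (-t) ^ (i + 1) / (i + 1)) + Real.log (1 - -t)
      = Real.log (1 + t) - (t - t^2/2 + t^3/3) := by
    rw [show (1:ℝ) - -t = 1 + t by ring]
    norm_num [Finset.sum_range_succ]
    ring
  rw [e1, abs_neg, abs_of_pos ht0] at key
  simpa using key

private lemma aux_limit (r ζ : ℝ) :
    Tendsto (Phi r ζ) (𝓝[>] (0:ℝ)) (𝓝 0) := by
  have hPhi : Phi r ζ = fun t =>
      (Real.log (1 + t) - (t - t^2/2 + t^3/3)) * (2*r*(1 - ζ - ζ*t))^3 / (t*(t+2))^3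
        + t * (r^3 * ((-14 - 2*ζ + 10*ζ^2 - 2*ζ^3) + (-8 + 7*ζ + 10*ζ^2 - 5*ζ^3)*t
            + (-4/3 + 3/2*ζ - 17/6*ζ^3)*t^2)) / (t+2)^3 := rfl
  rw [hPhi]
  have h2 : Tendsto (fun t : ℝ =>
      t * (r^3 * ((-14 - 2*ζ + 10*ζ^2 - 2*ζ^3) + (-8 + 7*ζ + 10*ζ^2 - 5*ζ^3)*t
          + (-4/3 + 3/2*ζ - 17/6*ζ^3)*t^2)) / (t+2)^3)
      (𝓝[>] (0:ℝ)) (𝓝 0) := by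
    have hc : ContinuousAt (fun t : ℝ =>
        t * (r^3 * ((-14 - 2*ζ + 10*ζ^2 - 2*ζ^3) + (-8 + 7*ζ + 10*ζ^2 - 5*ζ^3)*t
            + (-4/3 + 3/2*ζ - 17/6*ζ^3)*t^2)) / (t+2)^3) 0 := by
      apply ContinuousAt.div
      · fun_prop
      · fun_prop
      · norm_num
    have := hc.tendsto
    simp only [zero_mul, zero_div] at this
    exact this.mono_left nhdsWithin_le_nhds
  have h1 : Tendsto (fun t : ℝ =>
      (Real.log (1 + t) - (t - t^2/2 + t^3/3)) * (2*r*(1 - ζ - ζ*t))^3 / (t*(t+2))^3)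
      (𝓝[>] (0:ℝ)) (𝓝 0) := by
    apply squeeze_zero_norm' (a := fun t : ℝ => t/(1-t) * |2*r*(1 - ζ - ζ*t)|^3 / (t+2)^3)
    · filter_upwards [Ioo_mem_nhdsGT_of_mem
          (show (0:ℝ) ∈ Set.Ico (0:ℝ) (1/2) from ⟨le_refl _, by norm_num⟩)]
        with t ht
      obtain ⟨ht0, ht1⟩ := ht
      have ht1' : t < 1 := by linarith
      have h1t : (0:ℝ) < 1 - t := by linarith
      have hC : (0:ℝ) < (t*(t+2))^3 := by positivity
      have hlog := log_taylor_bound t ht0 ht1'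
      rw [Real.norm_eq_abs, abs_div, abs_of_pos hC, abs_mul]
      calc |Real.log (1 + t) - (t - t^2/2 + t^3/3)| * |(2*r*(1 - ζ - ζ*t))^3| / (t*(t+2))^3
          ≤ (t^4/(1-t)) * |(2*r*(1 - ζ - ζ*t))^3| / (t*(t+2))^3 := by gcongr
        _ = t/(1-t) * |2*r*(1 - ζ - ζ*t)|^3 / (t+2)^3 := by
            rw [abs_pow]
            have h1 : t ≠ 0 := ht0.ne'
            have h2 : t + 2 ≠ 0 := by linarith
            have h3 : (1:ℝ) - t ≠ 0 := h1t.ne'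
            field_simp
    · have hc : ContinuousAt (fun t : ℝ => t/(1-t) * |2*r*(1 - ζ - ζ*t)|^3 / (t+2)^3) 0 := by
        apply ContinuousAt.div
        · apply ContinuousAt.mul
          · exact ContinuousAt.div (by fun_prop) (by fun_prop) (by norm_num)
          · exact ((continuous_abs.comp (by fun_prop)).pow 3).continuousAt
        · fun_prop
        · norm_num
      have := hc.tendsto
      simp only [zero_div, zero_mul] at this
      exact this.mono_left nhdsWithin_le_nhds
  have := h1.add h2
  simpa using this

/-- third-order asymptotic expansion of ln(D_max(h)/h) as h → ∞. -/
theorem log_Dmax_over_h_expansion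
    (r ζ : ℝ) (hr : 0 < r) (hζ0 : 0 < ζ) (hζ1 : ζ < 1) :
    Tendsto
      (fun h : ℝ =>
        h ^ 3 *
          (Real.log ((Real.sqrt (h ^ 2 + 2 * h * r + r ^ 2 * ζ ^ 2) - r * ζ) / h)
            - r * (1 - ζ) / h
            - r ^ 2 * (ζ - 1) / h ^ 2
            - r ^ 3 * (ζ ^ 3 - 9 * ζ + 8) / (6 * h ^ 3)))
      atTop (𝓝 0) := by
  set tf : ℝ → ℝ := fun h => (Real.sqrt (h ^ 2 + 2 * h * r + r ^ 2 * ζ ^ 2) - r * ζ) / h - 1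
    with htf
  have tpos : ∀ h : ℝ, 0 < h → 0 < tf h := by
    intro h hh
    have hS : (0:ℝ) ≤ h ^ 2 + 2 * h * r + r ^ 2 * ζ ^ 2 := by positivity
    have hsq : h + r*ζ < Real.sqrt (h ^ 2 + 2 * h * r + r ^ 2 * ζ ^ 2) := by
      rw [show (h + r*ζ) = Real.sqrt ((h + r*ζ)^2) from (Real.sqrt_sq (by positivity)).symm]
      apply Real.sqrt_lt_sqrt (by positivity)
      nlinarith [mul_pos hh hr]
    have : 1 < (Real.sqrt (h ^ 2 + 2 * h * r + r ^ 2 * ζ ^ 2) - r * ζ) / h := by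
      rw [lt_div_iff₀ hh]; linarith
    simp only [htf]; linarith
  have hdrel : ∀ h : ℝ, 0 < h → h * (tf h * (tf h + 2)) = 2*r*(1 - ζ - ζ*(tf h)) := by
    intro h hh
    have hS : (0:ℝ) ≤ h ^ 2 + 2 * h * r + r ^ 2 * ζ ^ 2 := by positivity
    have hw : (Real.sqrt (h ^ 2 + 2 * h * r + r ^ 2 * ζ ^ 2)) ^ 2
        = h ^ 2 + 2 * h * r + r ^ 2 * ζ ^ 2 := Real.sq_sqrt hS
    set w := Real.sqrt (h ^ 2 + 2 * h * r + r ^ 2 * ζ ^ 2) with hwdef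
    have e1 : h * tf h = w - r*ζ - h := by
      simp only [htf]; rw [mul_sub, mul_div_cancel₀ _ hh.ne']; ring
    have hh' : h ≠ 0 := hh.ne'
    apply mul_left_cancel₀ hh'
    have expand : h * (h * (tf h * (tf h + 2))) = (h * tf h)^2 + 2*h*(h*tf h) := by ring
    have expand2 : h * (2*r*(1 - ζ - ζ*(tf h))) = 2*r*h - 2*r*ζ*h - 2*r*ζ*(h * tf h) := by
      ring
    rw [expand, expand2, e1]
    linear_combination hw
  have httend : Tendsto tf atTop (𝓝[>] (0:ℝ)) := by
    rw [tendsto_nhdsWithin_iff]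
    constructor
    · have heq : ∀ᶠ h in atTop, Real.sqrt (1 + 2*r/h + r^2*ζ^2/h^2) - r*ζ/h - 1 = tf h := by
        filter_upwards [eventually_gt_atTop (0:ℝ)] with h hh
        have hS : (0:ℝ) ≤ h ^ 2 + 2 * h * r + r ^ 2 * ζ ^ 2 := by positivity
        have : (1 + 2*r/h + r^2*ζ^2/h^2) = (h ^ 2 + 2 * h * r + r ^ 2 * ζ ^ 2)/h^2 := by
          field_simp
        rw [this, Real.sqrt_div hS, Real.sqrt_sq hh.le]
        simp only [htf]
        field_simp
      apply Tendsto.congr' heq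
      have l1 : Tendsto (fun h : ℝ => 2*r/h) atTop (𝓝 0) :=
        tendsto_const_nhds.div_atTop tendsto_id
      have l2 : Tendsto (fun h : ℝ => r^2*ζ^2/h^2) atTop (𝓝 0) :=
        tendsto_const_nhds.div_atTop (tendsto_pow_atTop two_ne_zero)
      have l3 : Tendsto (fun h : ℝ => r*ζ/h) atTop (𝓝 0) :=
        tendsto_const_nhds.div_atTop tendsto_id
      have linner : Tendsto (fun h : ℝ => 1 + 2*r/h + r^2*ζ^2/h^2) atTop (𝓝 1) := by
        have h0 : Tendsto (fun h : ℝ => 1 + 2*r/h) atTop (𝓝 1) := by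
          simpa using (tendsto_const_nhds (x := (1:ℝ)) (f := atTop)).add l1
        simpa using h0.add l2
      have lsqrt : Tendsto (fun h : ℝ => Real.sqrt (1 + 2*r/h + r^2*ζ^2/h^2)) atTop (𝓝 1) := by
        have := (Real.continuous_sqrt.continuousAt (x := (1:ℝ))).tendsto.comp linner
        rw [Real.sqrt_one] at this; exact this
      have := (lsqrt.sub l3).sub (tendsto_const_nhds (x := (1:ℝ)))
      simpa using this
    · filter_upwards [eventually_gt_atTop (0:ℝ)] with h hh
      exact tpos h hh
  have keyeq : ∀ᶠ h in atTop,
      (Phi r ζ ∘ tf) h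
      = h ^ 3 *
          (Real.log ((Real.sqrt (h ^ 2 + 2 * h * r + r ^ 2 * ζ ^ 2) - r * ζ) / h)
            - r * (1 - ζ) / h
            - r ^ 2 * (ζ - 1) / h ^ 2
            - r ^ 3 * (ζ ^ 3 - 9 * ζ + 8) / (6 * h ^ 3)) := by
    filter_upwards [eventually_gt_atTop (0:ℝ)] with h hh
    have hlog : (Real.sqrt (h ^ 2 + 2 * h * r + r ^ 2 * ζ ^ 2) - r * ζ) / h = 1 + tf h := by
      simp only [htf]; ring
    rw [hlog, Function.comp_apply, ← aux_ident r ζ (tf h) h (tpos h hh) hh (hdrel h hh)]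
  exact ((aux_limit r ζ).comp httend).congr' keyeq
end

section
/- Let r > 0, ζ ∈ (0, 1), ρ > 0, η > 0 and N > 0. For h > 0 set D_max(h) = √(h² + 2hr + r²ζ²) − rζ and define ACRB_z(h) = [ ηρN ( (r + h − rζ² − ζ·D_max(h))/(2(r + h)r²) − h(2r + h)·ln(D_max(h)/h)/(2r³(r + h)) − (r + h − (r(h − D_max(h)·ζ) + h(r + h))/D_max(h))² / (r³(r + h)·ln(D_max(h)/h)) ) ]⁻¹. Then lim_{h → 0⁺} ACRB_z(h) = [ ηρN ( (1 − ζ²)/(2r²) + (1 − ζ)²/(r²·ln ζ) ) ]⁻¹. -/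
open Filter Topology

lemma key_ineq {ζ : ℝ} (h0 : 0 < ζ) (h1 : ζ < 1) :
    2 * (1 - ζ) < (1 + ζ) * (-Real.log ζ) := by
  have hmono : StrictMonoOn (fun x : ℝ => 2 * (1 - x) / (1 + x) + Real.log x)
      (Set.Ioc 0 1) := by
    apply strictMonoOn_of_deriv_pos (convex_Ioc 0 1)
    · apply ContinuousOn.add
      · apply ContinuousOn.div (by fun_prop) (by fun_prop)
        intro x hx; have := hx.1; intro h; linarith [h]
      · exact fun x hx => (Real.continuousAt_log hx.1.ne').continuousWithinAt
    · intro x hx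
      rw [interior_Ioc] at hx
      obtain ⟨hx0, hx1⟩ := hx
      have h1x : (1 + x) ≠ 0 := by linarith
      have hd : HasDerivAt (fun x : ℝ => 2 * (1 - x) / (1 + x) + Real.log x)
          ((2 * -1 * (1 + x) - 2 * (1 - x) * 1) / (1 + x) ^ 2 + x⁻¹) x := by
        exact (((hasDerivAt_id x).const_sub 1 |>.const_mul 2).div
          ((hasDerivAt_id x).const_add 1) h1x).add (Real.hasDerivAt_log hx0.ne')
      rw [hd.deriv, inv_eq_one_div]
      rw [div_add_div _ _ (pow_ne_zero 2 h1x) hx0.ne']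
      apply div_pos
      · nlinarith
      · positivity
  have key := hmono (Set.mem_Ioc.mpr ⟨h0, h1.le⟩) (Set.mem_Ioc.mpr ⟨one_pos, le_refl 1⟩) h1
  norm_num at key
  have h1ζ : (0:ℝ) < 1 + ζ := by linarith
  have := (div_lt_iff₀ h1ζ).mp (by linarith : 2 * (1 - ζ) / (1 + ζ) < -Real.log ζ)
  nlinarith

noncomputable def auxA (r ζ h : ℝ) : ℝ := Real.sqrt (h ^ 2 + 2 * h * r + r ^ 2 * ζ ^ 2)

noncomputable def auxQ (r ζ h : ℝ) : ℝ := (h + 2 * r) / (auxA r ζ h + r * ζ)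

noncomputable def auxP (r ζ h : ℝ) : ℝ := (auxA r ζ h + r * ζ) / (h + 2 * r)

noncomputable def auxF (r ζ ρ η N h : ℝ) : ℝ :=
  η * ρ * N *
    ((r + h - r * ζ ^ 2 - ζ * (auxA r ζ h - r * ζ)) / (2 * (r + h) * r ^ 2)
      - h * (2 * r + h) * Real.log (auxQ r ζ h) / (2 * r ^ 3 * (r + h))
      - (r + h - (r * auxP r ζ h - r * ζ + auxP r ζ h * (r + h))) ^ 2 /
          (r ^ 3 * (r + h) * Real.log (auxQ r ζ h)))

@[fun_prop] lemma auxA_cont (r ζ : ℝ) : Continuous (auxA r ζ) := by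
  unfold auxA; fun_prop

lemma auxA_zero (r ζ : ℝ) (h0 : 0 ≤ r * ζ) : auxA r ζ 0 = r * ζ := by
  unfold auxA
  rw [show (0:ℝ) ^ 2 + 2 * 0 * r + r ^ 2 * ζ ^ 2 = (r * ζ) ^ 2 by ring, Real.sqrt_sq h0]

lemma auxQ_zero (r ζ : ℝ) (hr : 0 < r) (hζ0 : 0 < ζ) : auxQ r ζ 0 = ζ⁻¹ := by
  unfold auxQ
  rw [auxA_zero r ζ (by positivity)]
  rw [div_eq_iff (by positivity : r * ζ + r * ζ ≠ 0)]
  field_simp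
  ring

lemma auxP_zero (r ζ : ℝ) (hr : 0 < r) (hζ0 : 0 < ζ) : auxP r ζ 0 = ζ := by
  unfold auxP
  rw [auxA_zero r ζ (by positivity)]
  rw [div_eq_iff (by positivity : (0:ℝ) + 2 * r ≠ 0)]
  ring

lemma auxQ_contAt (r ζ : ℝ) (hr : 0 < r) (hζ0 : 0 < ζ) : ContinuousAt (auxQ r ζ) 0 := by
  unfold auxQ
  apply ContinuousAt.div (by fun_prop) (by fun_prop)
  show auxA r ζ 0 + r * ζ ≠ 0
  rw [auxA_zero r ζ (by positivity)]
  positivity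

lemma auxP_contAt (r ζ : ℝ) (hr : 0 < r) (hζ0 : 0 < ζ) : ContinuousAt (auxP r ζ) 0 := by
  unfold auxP
  apply ContinuousAt.div (by fun_prop) (by fun_prop)
  show (0:ℝ) + 2 * r ≠ 0
  positivity

lemma auxLogQ_contAt (r ζ : ℝ) (hr : 0 < r) (hζ0 : 0 < ζ) :
    ContinuousAt (fun h => Real.log (auxQ r ζ h)) 0 := by
  apply ContinuousAt.comp (g := Real.log)
  · exact Real.continuousAt_log (by rw [auxQ_zero r ζ hr hζ0]; exact inv_ne_zero hζ0.ne')
  · exact auxQ_contAt r ζ hr hζ0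

lemma auxF_contAt (r ζ ρ η N : ℝ) (hr : 0 < r) (hζ0 : 0 < ζ) (hζ1 : ζ < 1) :
    ContinuousAt (auxF r ζ ρ η N) 0 := by
  have hP := auxP_contAt r ζ hr hζ0
  have hLQ := auxLogQ_contAt r ζ hr hζ0
  have hlogζ : Real.log ζ < 0 := Real.log_neg hζ0 hζ1
  unfold auxF
  apply ContinuousAt.mul continuousAt_const
  apply ContinuousAt.sub
  apply ContinuousAt.sub
  · apply ContinuousAt.div (by fun_prop) (by fun_prop)
    show 2 * (r + 0) * r ^ 2 ≠ 0
    positivity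
  · apply ContinuousAt.div ((by fun_prop : ContinuousAt (fun h : ℝ => h * (2 * r + h)) 0).mul hLQ)
      (by fun_prop)
    show 2 * r ^ 3 * (r + 0) ≠ 0
    positivity
  · apply ContinuousAt.div (by fun_prop) ((by fun_prop : ContinuousAt (fun h : ℝ => r ^ 3 * (r + h)) 0).mul hLQ)
    show r ^ 3 * (r + 0) * Real.log (auxQ r ζ 0) ≠ 0
    rw [auxQ_zero r ζ hr hζ0, Real.log_inv]
    exact mul_ne_zero (by positivity) (neg_ne_zero.mpr hlogζ.ne)

lemma auxF_zero (r ζ ρ η N : ℝ) (hr : 0 < r) (hζ0 : 0 < ζ) (hζ1 : ζ < 1) :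
    auxF r ζ ρ η N 0 =
      η * ρ * N * ((1 - ζ ^ 2) / (2 * r ^ 2) + (1 - ζ) ^ 2 / (r ^ 2 * Real.log ζ)) := by
  have hlogζ : Real.log ζ < 0 := Real.log_neg hζ0 hζ1
  unfold auxF
  rw [auxA_zero r ζ (by positivity), auxQ_zero r ζ hr hζ0, auxP_zero r ζ hr hζ0, Real.log_inv]
  field_simp [hr.ne', hlogζ.ne]
  ring

-- algebraic identities on h > 0
lemma frac_log_eq (r ζ h A : ℝ) (hr : 0 < r) (hζ0 : 0 < ζ) (hh : 0 < h)
    (hA2 : A ^ 2 = h ^ 2 + 2 * h * r + r ^ 2 * ζ ^ 2) (hAgt : r * ζ < A) :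
    (A - r * ζ) / h = (h + 2 * r) / (A + r * ζ) := by
  have hApos : (0:ℝ) < A + r * ζ := by nlinarith
  rw [div_eq_div_iff hh.ne' hApos.ne']
  nlinarith [hA2]

lemma frac_p_eq (r ζ h A : ℝ) (hr : 0 < r) (hζ0 : 0 < ζ) (hh : 0 < h)
    (hA2 : A ^ 2 = h ^ 2 + 2 * h * r + r ^ 2 * ζ ^ 2) (hAgt : r * ζ < A) :
    (r * (h - (A - r * ζ) * ζ) + h * (r + h)) / (A - r * ζ) =
      r * ((A + r * ζ) / (h + 2 * r)) - r * ζ + ((A + r * ζ) / (h + 2 * r)) * (r + h) := by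
  have hD : (0:ℝ) < A - r * ζ := by linarith
  have h2r : (0:ℝ) < h + 2 * r := by linarith
  have hkey : (A - r * ζ) * (A + r * ζ) = h * (h + 2 * r) := by nlinarith [hA2]
  field_simp
  nlinarith [hkey, sq_nonneg A]

/-- lim_{h → 0⁺} ACRB_z(h) = (ηρN((1 − ζ²)/(2r²) + (1 − ζ)²/(r²·ln ζ)))⁻¹. -/
theorem ACRB_z_limit_at_zero
    (r ζ ρ η N : ℝ) (hr : 0 < r) (hζ0 : 0 < ζ) (hζ1 : ζ < 1)
    (hρ : 0 < ρ) (hη : 0 < η) (hN : 0 < N) :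
    Tendsto
      (fun h : ℝ =>
        let D := Real.sqrt (h ^ 2 + 2 * h * r + r ^ 2 * ζ ^ 2) - r * ζ
        (η * ρ * N *
          ((r + h - r * ζ ^ 2 - ζ * D) / (2 * (r + h) * r ^ 2)
            - h * (2 * r + h) * Real.log (D / h) / (2 * r ^ 3 * (r + h))
            - (r + h - (r * (h - D * ζ) + h * (r + h)) / D) ^ 2 /
                (r ^ 3 * (r + h) * Real.log (D / h))))⁻¹)
      (𝓝[>] 0)
      (𝓝 ((η * ρ * N *
            ((1 - ζ ^ 2) / (2 * r ^ 2)
              + (1 - ζ) ^ 2 / (r ^ 2 * Real.log ζ)))⁻¹)) := by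
  have hlogζ : Real.log ζ < 0 := Real.log_neg hζ0 hζ1
  have hL : 0 < -Real.log ζ := neg_pos.mpr hlogζ
  have hS : 0 < (1 - ζ ^ 2) / (2 * r ^ 2) + (1 - ζ) ^ 2 / (r ^ 2 * Real.log ζ) := by
    have hSeq : (1 - ζ ^ 2) / (2 * r ^ 2) + (1 - ζ) ^ 2 / (r ^ 2 * Real.log ζ) =
        ((1 + ζ) * (-Real.log ζ) - 2 * (1 - ζ)) * (1 - ζ) / (2 * r ^ 2 * (-Real.log ζ)) := by
      field_simp [hr.ne', hlogζ.ne]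
      ring
    rw [hSeq]
    apply div_pos
    · exact mul_pos (by linarith [key_ineq hζ0 hζ1]) (by linarith)
    · positivity
  have hF0 : auxF r ζ ρ η N 0 =
      η * ρ * N * ((1 - ζ ^ 2) / (2 * r ^ 2) + (1 - ζ) ^ 2 / (r ^ 2 * Real.log ζ)) :=
    auxF_zero r ζ ρ η N hr hζ0 hζ1
  have hne : auxF r ζ ρ η N 0 ≠ 0 := by
    rw [hF0]
    exact (mul_pos (by positivity) hS).ne'
  have htend : Tendsto (fun h => (auxF r ζ ρ η N h)⁻¹) (𝓝[>] (0:ℝ))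
      (𝓝 ((auxF r ζ ρ η N 0)⁻¹)) :=
    (((auxF_contAt r ζ ρ η N hr hζ0 hζ1).tendsto).mono_left nhdsWithin_le_nhds).inv₀ hne
  rw [hF0] at htend
  refine htend.congr' ?_
  filter_upwards [self_mem_nhdsWithin] with h hh
  have hh : (0:ℝ) < h := hh
  simp only []
  congr 1
  have hargnn : (0:ℝ) ≤ h ^ 2 + 2 * h * r + r ^ 2 * ζ ^ 2 := by nlinarith
  set A : ℝ := Real.sqrt (h ^ 2 + 2 * h * r + r ^ 2 * ζ ^ 2) with hAdef
  have hA2 : A ^ 2 = h ^ 2 + 2 * h * r + r ^ 2 * ζ ^ 2 := Real.sq_sqrt hargnn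
  have hAgt : r * ζ < A := by
    rw [hAdef, show r * ζ = Real.sqrt ((r * ζ) ^ 2) from (Real.sqrt_sq (by positivity)).symm]
    apply Real.sqrt_lt_sqrt (by positivity)
    nlinarith
  unfold auxF auxQ auxP auxA
  rw [← hAdef]
  rw [← frac_log_eq r ζ h A hr hζ0 hh hA2 hAgt,
    ← frac_p_eq r ζ h A hr hζ0 hh hA2 hAgt]
end
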